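/- Let P and Q be orthogonal projections on a finite-dimensional complex inner product space and let Ω be a positive semidefinite Hermitian operator. Then |Tr(Q Ω P)| ≤ ‖PQ‖_∞ · (Tr(QΩ))^{1/2} · (Tr(PΩ))^{1/2}, where ‖·‖_∞ is the operator norm. -/

import Mathlib

open scoped InnerProduct ComplexConjugate

local notation "⟪" x ", " y "⟫" => @inner ℂ _ _ x y

/-- Trace of a linear map as a sum of diagonal inner products in an orthonormal basis. -/
lemma trace_eq_sum_inner' {E : Type*} [NormedAddCommGroup E] [InnerProductSpace ℂ E]
    [FiniteDimensional ℂ E] {ι : Type*} [Fintype ι] [DecidableEq ι]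
    (b : OrthonormalBasis ι ℂ E) (f : E →ₗ[ℂ] E) :
    LinearMap.trace ℂ E f = ∑ i, ⟪b i, f (b i)⟫ := by
  rw [LinearMap.trace_eq_matrix_trace ℂ b.toBasis, Matrix.trace]
  congr 1
  ext i
  rw [Matrix.diag_apply, LinearMap.toMatrix_apply, OrthonormalBasis.coe_toBasis_repr_apply,
    OrthonormalBasis.repr_apply_apply, OrthonormalBasis.coe_toBasis]

/-- Let `P` and `Q` be orthogonal projections on a finite-dimensional
complex inner product space and let `Ω` be a positive semidefinite Hermitian operator.
Then `|Tr(QΩP)| ≤ ‖PQ‖ · (Tr QΩ)^{1/2} · (Tr PΩ)^{1/2}`. -/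
theorem stmt0 {E : Type*} [NormedAddCommGroup E] [InnerProductSpace ℂ E]
    [FiniteDimensional ℂ E]
    (P Q Ω : E →L[ℂ] E)
    (hP : P ∘L P = P) (hPadj : ContinuousLinearMap.adjoint P = P)
    (hQ : Q ∘L Q = Q) (hQadj : ContinuousLinearMap.adjoint Q = Q)
    (hΩ : Ω.IsPositive) :
    ‖LinearMap.trace ℂ E ((Q ∘L Ω ∘L P : E →L[ℂ] E) : E →ₗ[ℂ] E)‖ ≤
      ‖P ∘L Q‖ * Real.sqrt ((LinearMap.trace ℂ E ((Q ∘L Ω : E →L[ℂ] E) : E →ₗ[ℂ] E)).re) *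
        Real.sqrt ((LinearMap.trace ℂ E ((P ∘L Ω : E →L[ℂ] E) : E →ₗ[ℂ] E)).re) := by
  classical
  have hsym : (Ω : E →ₗ[ℂ] E).IsSymmetric :=
    hΩ.1
  set n := Module.finrank ℂ E with hn
  set b : OrthonormalBasis (Fin n) ℂ E := hsym.eigenvectorBasis rfl with hb
  set μ : Fin n → ℝ := hsym.eigenvalues rfl with hμ
  have hbev : ∀ i, Ω (b i) = (μ i : ℂ) • b i := fun i => hsym.apply_eigenvectorBasis rfl i
  have hbnorm : ∀ i, ⟪b i, b i⟫ = 1 := fun i => by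
    rw [inner_self_eq_norm_sq_to_K, b.orthonormal.1 i]
    norm_num
  have hμpos : ∀ i, 0 ≤ μ i := fun i => by
    have h := hΩ.inner_nonneg_right (b i)
    rw [hbev i, inner_smul_right, hbnorm i, mul_one] at h
    simpa using h
  have hPinner : ∀ (x y : E), ⟪x, P y⟫ = ⟪P x, y⟫ := fun x y => by
    conv_lhs => rw [← hPadj]
    rw [ContinuousLinearMap.adjoint_inner_right]
  have hQinner : ∀ (x y : E), ⟪x, Q y⟫ = ⟪Q x, y⟫ := fun x y => by
    conv_lhs => rw [← hQadj]
    rw [ContinuousLinearMap.adjoint_inner_right]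
  have hPP : ∀ x, P (P x) = P x := fun x => by
    rw [← ContinuousLinearMap.comp_apply, hP]
  have hQQ : ∀ x, Q (Q x) = Q x := fun x => by
    rw [← ContinuousLinearMap.comp_apply, hQ]
  -- trace of Q Ω P equals trace of P Q Ω (cyclicity)
  have hcyc : LinearMap.trace ℂ E ((Q ∘L Ω ∘L P : E →L[ℂ] E) : E →ₗ[ℂ] E)
      = LinearMap.trace ℂ E ((P ∘L (Q ∘L Ω) : E →L[ℂ] E) : E →ₗ[ℂ] E) := by
    have : ((Q ∘L Ω ∘L P : E →L[ℂ] E) : E →ₗ[ℂ] E)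
        = ((Q ∘L Ω : E →L[ℂ] E) : E →ₗ[ℂ] E) * (P : E →ₗ[ℂ] E) := rfl
    rw [this, LinearMap.trace_mul_comm]
    rfl
  -- key diagonal term computation
  have hterm : ∀ i, ⟪b i, ((P ∘L (Q ∘L Ω) : E →L[ℂ] E) : E →ₗ[ℂ] E) (b i)⟫
      = (μ i : ℂ) * ⟪P (b i), (P ∘L Q) (Q (b i))⟫ := by
    intro i
    have h1 : ((P ∘L (Q ∘L Ω) : E →L[ℂ] E) : E →ₗ[ℂ] E) (b i)
        = (μ i : ℂ) • P (Q (b i)) := by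
      show P (Q (Ω (b i))) = _
      rw [hbev i, map_smul, map_smul]
    rw [h1, inner_smul_right]
    congr 1
    have h2 : (P ∘L Q) (Q (b i)) = P (Q (b i)) := by
      show P (Q (Q (b i))) = _
      rw [hQQ]
    rw [h2]
    calc ⟪b i, P (Q (b i))⟫ = ⟪P (b i), Q (b i)⟫ := hPinner _ _
      _ = ⟪P (P (b i)), Q (b i)⟫ := by rw [hPP]
      _ = ⟪P (b i), P (Q (b i))⟫ := (hPinner _ _).symm
  -- traces of QΩ and PΩ as real sums
  have htrQ : (LinearMap.trace ℂ E ((Q ∘L Ω : E →L[ℂ] E) : E →ₗ[ℂ] E)).re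
      = ∑ i, μ i * ‖Q (b i)‖ ^ 2 := by
    rw [trace_eq_sum_inner' b, Complex.re_sum]
    refine Finset.sum_congr rfl fun i _ => ?_
    have h0 : ((Q ∘L Ω : E →L[ℂ] E) : E →ₗ[ℂ] E) (b i) = (μ i : ℂ) • Q (b i) := by
      show Q (Ω (b i)) = _
      rw [hbev i, map_smul]
    rw [h0, inner_smul_right]
    have h1 : ⟪b i, Q (b i)⟫ = ⟪Q (b i), Q (b i)⟫ := by
      conv_lhs => rw [← hQQ (b i)]
      exact hQinner _ _
    rw [h1]
    have h2 : (⟪Q (b i), Q (b i)⟫ : ℂ).re = ‖Q (b i)‖ ^ 2 := by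
      simpa using inner_self_eq_norm_sq (𝕜 := ℂ) _
    have h3 : (⟪Q (b i), Q (b i)⟫ : ℂ).im = 0 := by
      exact inner_self_im (𝕜 := ℂ) (Q (b i))
    rw [Complex.mul_re, Complex.ofReal_re, Complex.ofReal_im, h2, h3]
    ring
  have htrP : (LinearMap.trace ℂ E ((P ∘L Ω : E →L[ℂ] E) : E →ₗ[ℂ] E)).re
      = ∑ i, μ i * ‖P (b i)‖ ^ 2 := by
    rw [trace_eq_sum_inner' b, Complex.re_sum]
    refine Finset.sum_congr rfl fun i _ => ?_
    have h0 : ((P ∘L Ω : E →L[ℂ] E) : E →ₗ[ℂ] E) (b i) = (μ i : ℂ) • P (b i) := by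
      show P (Ω (b i)) = _
      rw [hbev i, map_smul]
    rw [h0, inner_smul_right]
    have h1 : ⟪b i, P (b i)⟫ = ⟪P (b i), P (b i)⟫ := by
      conv_lhs => rw [← hPP (b i)]
      exact hPinner _ _
    rw [h1]
    have h2 : (⟪P (b i), P (b i)⟫ : ℂ).re = ‖P (b i)‖ ^ 2 := by
      simpa using inner_self_eq_norm_sq (𝕜 := ℂ) _
    have h3 : (⟪P (b i), P (b i)⟫ : ℂ).im = 0 := by
      exact inner_self_im (𝕜 := ℂ) (P (b i))
    rw [Complex.mul_re, Complex.ofReal_re, Complex.ofReal_im, h2, h3]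
    ring
  -- bound the trace
  rw [hcyc, trace_eq_sum_inner' b]
  calc ‖∑ i, ⟪b i, ((P ∘L (Q ∘L Ω) : E →L[ℂ] E) : E →ₗ[ℂ] E) (b i)⟫‖
      ≤ ∑ i, ‖(μ i : ℂ) * ⟪P (b i), (P ∘L Q) (Q (b i))⟫‖ := by
        rw [show (∑ i, ⟪b i, ((P ∘L (Q ∘L Ω) : E →L[ℂ] E) : E →ₗ[ℂ] E) (b i)⟫)
          = ∑ i, (μ i : ℂ) * ⟪P (b i), (P ∘L Q) (Q (b i))⟫ from
          Finset.sum_congr rfl (fun i _ => hterm i)]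
        simpa using norm_sum_le Finset.univ
          (fun i => (μ i : ℂ) * ⟪P (b i), (P ∘L Q) (Q (b i))⟫)
    _ ≤ ∑ i, ‖P ∘L Q‖ * ((Real.sqrt (μ i) * ‖Q (b i)‖) * (Real.sqrt (μ i) * ‖P (b i)‖)) := by
        apply Finset.sum_le_sum
        intro i _
        rw [norm_mul]
        have habs : ‖(μ i : ℂ)‖ = μ i := by
          rw [Complex.norm_real, Real.norm_eq_abs, abs_of_nonneg (hμpos i)]
        rw [habs]
        have hCS : ‖⟪P (b i), (P ∘L Q) (Q (b i))⟫‖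
            ≤ ‖P (b i)‖ * (‖P ∘L Q‖ * ‖Q (b i)‖) := by
          refine le_trans (norm_inner_le_norm _ _) ?_
          exact mul_le_mul_of_nonneg_left ((P ∘L Q).le_opNorm (Q (b i))) (norm_nonneg _)
        calc μ i * ‖⟪P (b i), (P ∘L Q) (Q (b i))⟫‖
            ≤ μ i * (‖P (b i)‖ * (‖P ∘L Q‖ * ‖Q (b i)‖)) :=
              mul_le_mul_of_nonneg_left hCS (hμpos i)
          _ = ‖P ∘L Q‖ * ((Real.sqrt (μ i) * ‖Q (b i)‖) * (Real.sqrt (μ i) * ‖P (b i)‖)) := by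
              rw [show Real.sqrt (μ i) * ‖Q (b i)‖ * (Real.sqrt (μ i) * ‖P (b i)‖)
                = (Real.sqrt (μ i) * Real.sqrt (μ i)) * (‖Q (b i)‖ * ‖P (b i)‖) by ring,
                Real.mul_self_sqrt (hμpos i)]
              ring
    _ = ‖P ∘L Q‖ * ∑ i, (Real.sqrt (μ i) * ‖Q (b i)‖) * (Real.sqrt (μ i) * ‖P (b i)‖) := by
        rw [Finset.mul_sum]
    _ ≤ ‖P ∘L Q‖ * (Real.sqrt (∑ i, μ i * ‖Q (b i)‖ ^ 2)
          * Real.sqrt (∑ i, μ i * ‖P (b i)‖ ^ 2)) := by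
        apply mul_le_mul_of_nonneg_left _ (norm_nonneg _)
        set f : Fin n → ℝ := fun i => Real.sqrt (μ i) * ‖Q (b i)‖ with hf
        set g : Fin n → ℝ := fun i => Real.sqrt (μ i) * ‖P (b i)‖ with hg
        have key := Finset.sum_mul_sq_le_sq_mul_sq Finset.univ f g
        have hfsq : ∑ i, f i ^ 2 = ∑ i, μ i * ‖Q (b i)‖ ^ 2 :=
          Finset.sum_congr rfl fun i _ => by
            rw [hf, mul_pow, Real.sq_sqrt (hμpos i)]
        have hgsq : ∑ i, g i ^ 2 = ∑ i, μ i * ‖P (b i)‖ ^ 2 :=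
          Finset.sum_congr rfl fun i _ => by
            rw [hg, mul_pow, Real.sq_sqrt (hμpos i)]
        have hnn : 0 ≤ ∑ i, f i * g i :=
          Finset.sum_nonneg fun i _ => mul_nonneg
            (mul_nonneg (Real.sqrt_nonneg _) (norm_nonneg _))
            (mul_nonneg (Real.sqrt_nonneg _) (norm_nonneg _))
        have hA : 0 ≤ ∑ i, f i ^ 2 := Finset.sum_nonneg fun i _ => sq_nonneg _
        calc ∑ i, f i * g i = Real.sqrt ((∑ i, f i * g i) ^ 2) := by
              rw [Real.sqrt_sq hnn]
          _ ≤ Real.sqrt ((∑ i, f i ^ 2) * ∑ i, g i ^ 2) := Real.sqrt_le_sqrt key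
          _ = Real.sqrt (∑ i, μ i * ‖Q (b i)‖ ^ 2) * Real.sqrt (∑ i, μ i * ‖P (b i)‖ ^ 2) := by
              rw [Real.sqrt_mul hA, hfsq, hgsq]
    _ = ‖P ∘L Q‖ * Real.sqrt ((LinearMap.trace ℂ E ((Q ∘L Ω : E →L[ℂ] E) : E →ₗ[ℂ] E)).re)
          * Real.sqrt ((LinearMap.trace ℂ E ((P ∘L Ω : E →L[ℂ] E) : E →ₗ[ℂ] E)).re) := by
        rw [htrQ, htrP]; ring
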